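/- A positive distribution P⁰ on a linear constraint manifold L (given by ∑_j m_{rj} p_j = M_r) satisfies the local Markov-order minimum condition (P⁰ + Q(P⁰,P*)) ∩ L = {P⁰} if and only if there exists a linear functional ψ(P) = ∑_i ψ_i p_i vanishing on L⁰ = ker m such that (ψ_i − ψ_j)(p⁰_i/p*_i − p⁰_j/p*_j) > 0 whenever p⁰_i/p*_i ≠ p⁰_j/p*_j. -/

import Mathlib

private lemma dot_gen (n : ℕ) (ψ : Fin n → ℝ) (i j : Fin n) :
    ∑ l, ψ l * ((if l = i then (1:ℝ) else 0) - if l = j then 1 else 0) = ψ i - ψ j := by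
  simp [mul_sub, Finset.sum_sub_distrib, mul_ite, mul_one, mul_zero, Finset.sum_ite_eq']

private lemma dot_bigsum (n : ℕ) (ψ : Fin n → ℝ) (c : Fin n → Fin n → ℝ) :
    ∑ l, ψ l * (∑ i, ∑ j ∈ Finset.univ.filter (fun j => j < i),
        c i j • (fun l => (if l = i then (1 : ℝ) else 0) - if l = j then 1 else 0)) l
      = ∑ i, ∑ j ∈ Finset.univ.filter (fun j => j < i), c i j * (ψ i - ψ j) := by
  have h1 : ∀ l, (∑ i, ∑ j ∈ Finset.univ.filter (fun j => j < i),
      c i j • (fun l => (if l = i then (1 : ℝ) else 0) - if l = j then 1 else 0)) l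
      = ∑ i, ∑ j ∈ Finset.univ.filter (fun j => j < i),
          c i j * ((if l = i then (1 : ℝ) else 0) - if l = j then 1 else 0) := by
    intro l
    simp [Finset.sum_apply]
  calc ∑ l, ψ l * (∑ i, ∑ j ∈ Finset.univ.filter (fun j => j < i),
        c i j • (fun l => (if l = i then (1 : ℝ) else 0) - if l = j then 1 else 0)) l
      = ∑ l, ∑ i, ∑ j ∈ Finset.univ.filter (fun j => j < i),
          ψ l * (c i j * ((if l = i then (1 : ℝ) else 0) - if l = j then 1 else 0)) := by
        refine Finset.sum_congr rfl fun l _ => ?_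
        rw [h1, Finset.mul_sum]
        refine Finset.sum_congr rfl fun i _ => ?_
        rw [Finset.mul_sum]
    _ = ∑ i, ∑ j ∈ Finset.univ.filter (fun j => j < i),
          ∑ l, ψ l * (c i j * ((if l = i then (1 : ℝ) else 0) - if l = j then 1 else 0)) := by
        rw [Finset.sum_comm]
        refine Finset.sum_congr rfl fun i _ => Finset.sum_comm
    _ = ∑ i, ∑ j ∈ Finset.univ.filter (fun j => j < i), c i j * (ψ i - ψ j) := by
        refine Finset.sum_congr rfl fun i _ => Finset.sum_congr rfl fun j _ => ?_
        rw [← dot_gen n ψ i j, Finset.mul_sum]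
        exact Finset.sum_congr rfl fun l _ => by ring

/-- A positive distribution `P⁰` on the constraint manifold
`L = {P : ∑_j m_{rj} p_j = M_r}` satisfies the local Markov-order minimum
condition `(P⁰ + Q(P⁰,P*)) ∩ L = {P⁰}` iff there is a linear functional
`ψ(P) = ∑ᵢ ψᵢ pᵢ` vanishing on `L⁰ = ker m` with
`(ψᵢ − ψ_j)(p⁰ᵢ/p*ᵢ − p⁰_j/p*_j) > 0` whenever `p⁰ᵢ/p*ᵢ ≠ p⁰_j/p*_j`. -/
theorem local_markov_minimum_iff_separating_functional
    (n k : ℕ) (ps : Fin n → ℝ) (hps : ∀ i, 0 < ps i)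
    (m : Fin (k + 1) → Fin n → ℝ) (M : Fin (k + 1) → ℝ)
    (p0 : Fin n → ℝ) (hp0 : ∀ i, 0 < p0 i)
    (hp0L : ∀ r, ∑ j, m r j * p0 j = M r) :
    let Q : Set (Fin n → ℝ) :=
      {v | ∃ w : Fin n → Fin n → ℝ, (∀ i j, 0 ≤ w i j) ∧
        v = ∑ i, ∑ j ∈ Finset.univ.filter (fun j => j < i),
          (w i j * Real.sign (p0 j / ps j - p0 i / ps i)) •
            (fun l => (if l = i then (1 : ℝ) else 0) - if l = j then 1 else 0)}
    let L : Set (Fin n → ℝ) := {p | ∀ r, ∑ j, m r j * p j = M r}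
    ({p | ∃ v ∈ Q, p = p0 + v} ∩ L = {p0}) ↔
      ∃ ψ : Fin n → ℝ,
        (∀ x : Fin n → ℝ, (∀ r, ∑ j, m r j * x j = 0) → ∑ i, ψ i * x i = 0) ∧
        (∀ i j, p0 i / ps i ≠ p0 j / ps j →
          0 < (ψ i - ψ j) * (p0 i / ps i - p0 j / ps j)) := by
  classical
  intro Q L
  have hQzero : (0 : Fin n → ℝ) ∈ Q := by
    refine ⟨fun _ _ => 0, fun i j => le_refl 0, ?_⟩
    simp
  -- Step 1: reduce the set equation to triviality of Q ∩ ker m.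
  have key : ({p | ∃ v ∈ Q, p = p0 + v} ∩ L = {p0}) ↔
      ∀ v ∈ Q, (∀ s, ∑ j, m s j * v j = 0) → v = 0 := by
    constructor
    · intro h v hv hker
      have hL : p0 + v ∈ L := by
        intro s
        have h3 : ∑ j, m s j * (p0 + v) j = ∑ j, m s j * p0 j + ∑ j, m s j * v j := by
          rw [← Finset.sum_add_distrib]
          exact Finset.sum_congr rfl fun j _ => by simp only [Pi.add_apply, mul_add]
        rw [h3, hp0L s, hker s, add_zero]
      have hmem : p0 + v ∈ ({p | ∃ v ∈ Q, p = p0 + v} ∩ L) := ⟨⟨v, hv, rfl⟩, hL⟩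
      rw [h] at hmem
      have h2 : p0 + v = p0 := hmem
      exact add_eq_left.mp h2
    · intro h
      apply Set.eq_singleton_iff_unique_mem.mpr
      constructor
      · exact ⟨⟨0, hQzero, (add_zero p0).symm⟩, hp0L⟩
      · rintro p ⟨⟨v, hv, rfl⟩, hpL⟩
        have hker : ∀ s, ∑ j, m s j * v j = 0 := by
          intro s
          have h1 : ∑ j, m s j * (p0 + v) j = M s := hpL s
          have h3 : ∑ j, m s j * (p0 + v) j = ∑ j, m s j * p0 j + ∑ j, m s j * v j := by
            rw [← Finset.sum_add_distrib]
            exact Finset.sum_congr rfl fun j _ => by simp only [Pi.add_apply, mul_add]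
          have h2 := hp0L s
          linarith [h3 ▸ h1]
        rw [h v hv hker, add_zero]
  rw [key]
  constructor
  · -- Hahn–Banach separation direction
    intro htriv
    set e : Fin n → (Fin n → ℝ) := fun i l => if l = i then (1:ℝ) else 0 with he
    set G : Set (Fin n → ℝ) := (fun q : Fin n × Fin n =>
        Real.sign (p0 q.2 / ps q.2 - p0 q.1 / ps q.1) •
          (fun l => (if l = q.1 then (1:ℝ) else 0) - if l = q.2 then 1 else 0)) ''
        {q : Fin n × Fin n | q.2 < q.1 ∧ p0 q.1 / ps q.1 ≠ p0 q.2 / ps q.2} with hG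
    have hGfin : G.Finite := Set.Finite.image _ (Set.toFinite _)
    have hQconv : Convex ℝ Q := by
      intro x hx y hy a b ha hb hab
      obtain ⟨wx, hwx, hxe⟩ := hx
      obtain ⟨wy, hwy, hye⟩ := hy
      refine ⟨fun i j => a * wx i j + b * wy i j,
        fun i j => add_nonneg (mul_nonneg ha (hwx i j)) (mul_nonneg hb (hwy i j)), ?_⟩
      rw [hxe, hye, Finset.smul_sum, Finset.smul_sum, ← Finset.sum_add_distrib]
      refine Finset.sum_congr rfl fun i _ => ?_
      rw [Finset.smul_sum, Finset.smul_sum, ← Finset.sum_add_distrib]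
      refine Finset.sum_congr rfl fun j _ => ?_
      rw [smul_smul, smul_smul, ← add_smul]
      congr 1
      ring
    have hlin : IsLinearMap ℝ (fun x : Fin n → ℝ => ∑ i, (p0 i / ps i) * x i) := by
      constructor
      · intro x y
        rw [← Finset.sum_add_distrib]
        exact Finset.sum_congr rfl fun i _ => by simp only [Pi.add_apply, mul_add]
      · intro c x
        rw [Finset.smul_sum]
        exact Finset.sum_congr rfl fun i _ => by
          simp only [Pi.smul_apply, smul_eq_mul]; ring
    have hSconv : Convex ℝ (Q ∩ {x : Fin n → ℝ | ∑ i, (p0 i / ps i) * x i < 0}) :=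
      hQconv.inter (convex_halfSpace_lt hlin 0)
    have hGS : G ⊆ Q ∩ {x : Fin n → ℝ | ∑ i, (p0 i / ps i) * x i < 0} := by
      rintro x ⟨⟨i, j⟩, ⟨hlt, hne⟩, rfl⟩
      dsimp only at hlt hne ⊢
      constructor
      · refine ⟨fun a b => if a = i ∧ b = j then 1 else 0,
          fun a b => by dsimp only; split <;> norm_num, ?_⟩
        symm
        calc (∑ i', ∑ j' ∈ Finset.univ.filter (fun j' => j' < i'),
              ((if i' = i ∧ j' = j then (1:ℝ) else 0) * Real.sign (p0 j' / ps j' - p0 i' / ps i')) •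
                (fun l => (if l = i' then (1 : ℝ) else 0) - if l = j' then 1 else 0))
            = ∑ j' ∈ Finset.univ.filter (fun j' => j' < i),
              ((if i = i ∧ j' = j then (1:ℝ) else 0) * Real.sign (p0 j' / ps j' - p0 i / ps i)) •
                (fun l => (if l = i then (1 : ℝ) else 0) - if l = j' then 1 else 0) := by
              refine Finset.sum_eq_single i (fun b _ hb => Finset.sum_eq_zero fun c _ => ?_)
                (fun h => absurd (Finset.mem_univ i) h)
              rw [if_neg (fun hc => hb hc.1), zero_mul, zero_smul]
          _ = ((if i = i ∧ j = j then (1:ℝ) else 0) * Real.sign (p0 j / ps j - p0 i / ps i)) •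
                (fun l => (if l = i then (1 : ℝ) else 0) - if l = j then 1 else 0) := by
              refine Finset.sum_eq_single j (fun c _ hc => ?_)
                (fun h => absurd (show j ∈ Finset.univ.filter (fun j' => j' < i) from Finset.mem_filter.mpr ⟨Finset.mem_univ j, hlt⟩) h)
              rw [if_neg (fun hcc => hc hcc.2), zero_mul, zero_smul]
          _ = Real.sign (p0 j / ps j - p0 i / ps i) •
                (fun l => (if l = i then (1 : ℝ) else 0) - if l = j then 1 else 0) := by
              rw [if_pos ⟨rfl, rfl⟩, one_mul]
      · show ∑ l, (p0 l / ps l) * (Real.sign (p0 j / ps j - p0 i / ps i) •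
          (fun l => (if l = i then (1 : ℝ) else 0) - if l = j then 1 else 0)) l < 0
        have hcomp : ∑ l, (p0 l / ps l) * (Real.sign (p0 j / ps j - p0 i / ps i) •
            (fun l => (if l = i then (1 : ℝ) else 0) - if l = j then 1 else 0)) l
            = Real.sign (p0 j / ps j - p0 i / ps i) * (p0 i / ps i - p0 j / ps j) := by
          rw [← dot_gen n (fun l => p0 l / ps l) i j, Finset.mul_sum]
          exact Finset.sum_congr rfl fun l _ => by
            simp only [Pi.smul_apply, smul_eq_mul]; ring
        rw [hcomp]
        rcases hne.lt_or_gt with h | h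
        · rw [Real.sign_of_pos (by linarith), one_mul]; linarith
        · rw [Real.sign_of_neg (by linarith)]; linarith
    have hconvG : convexHull ℝ G ⊆ Q ∩ {x : Fin n → ℝ | ∑ i, (p0 i / ps i) * x i < 0} :=
      convexHull_min hGS hSconv
    have hkerconv : Convex ℝ {x : Fin n → ℝ | ∀ s, ∑ j, m s j * x j = 0} := by
      intro x hx y hy a b ha hb hab s
      have h3 : ∑ j, m s j * (a • x + b • y) j
          = a * ∑ j, m s j * x j + b * ∑ j, m s j * y j := by
        rw [Finset.mul_sum, Finset.mul_sum, ← Finset.sum_add_distrib]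
        exact Finset.sum_congr rfl fun j _ => by
          simp only [Pi.add_apply, Pi.smul_apply, smul_eq_mul]; ring
      rw [h3, hx s, hy s]; ring
    have hkerclosed : IsClosed {x : Fin n → ℝ | ∀ s, ∑ j, m s j * x j = 0} := by
      have hrw : {x : Fin n → ℝ | ∀ s, ∑ j, m s j * x j = 0}
          = ⋂ s, {x : Fin n → ℝ | ∑ j, m s j * x j = 0} := by
        ext x; simp [Set.mem_iInter]
      rw [hrw]
      exact isClosed_iInter fun s => isClosed_eq
        (continuous_finset_sum _ fun j _ => continuous_const.mul (continuous_apply j))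
        continuous_const
    have hdisj : Disjoint (convexHull ℝ G) {x : Fin n → ℝ | ∀ s, ∑ j, m s j * x j = 0} := by
      rw [Set.disjoint_left]
      intro x hx hxker
      obtain ⟨hxQ, hxneg⟩ := hconvG hx
      have hx0 := htriv x hxQ hxker
      rw [hx0] at hxneg
      simp at hxneg
    obtain ⟨f, u, vv, hfu, huv, hker_f⟩ := _root_.geometric_hahn_banach_compact_closed
      (convex_convexHull ℝ G) (hGfin.isCompact_convexHull (𝕜 := ℝ)) hkerconv hkerclosed hdisj
    have hker0 : ∀ x : Fin n → ℝ, (∀ s, ∑ j, m s j * x j = 0) → f x = 0 := by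
      intro bb hb
      by_contra hne
      have hsc : ∀ s, ∑ j, m s j * (((vv - 1) / f bb) • bb) j = 0 := by
        intro s
        have h4 : ∑ j, m s j * (((vv - 1) / f bb) • bb) j
            = ((vv - 1) / f bb) * ∑ j, m s j * bb j := by
          rw [Finset.mul_sum]
          exact Finset.sum_congr rfl fun j _ => by
            simp only [Pi.smul_apply, smul_eq_mul]; ring
        rw [h4, hb s, mul_zero]
      have h1 := hker_f (((vv - 1) / f bb) • bb) hsc
      rw [map_smul, smul_eq_mul, div_mul_cancel₀ _ hne] at h1
      linarith
    have hvneg : vv < 0 := by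
      have h0 := hker_f 0 (by intro s; simp)
      rw [map_zero] at h0
      exact h0
    refine ⟨fun i => f (e i), ?_, ?_⟩
    · intro x hx
      have hdotf : ∑ i, f (e i) * x i = f x := by
        have hx2 : x = ∑ i, x i • e i := by
          funext l
          simp [e, Finset.sum_apply, Pi.smul_apply, smul_eq_mul, mul_ite, mul_one, mul_zero,
            Finset.sum_ite_eq']
        conv_rhs => rw [hx2]
        rw [map_sum]
        exact Finset.sum_congr rfl fun i _ => by rw [map_smul, smul_eq_mul, mul_comm]
      rw [hdotf]
      exact hker0 x hx
    · have aux : ∀ i j : Fin n, j < i → p0 i / ps i ≠ p0 j / ps j →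
          0 < (f (e i) - f (e j)) * (p0 i / ps i - p0 j / ps j) := by
        intro i j hlt hne
        have hmem : Real.sign (p0 j / ps j - p0 i / ps i) •
            (fun l => (if l = i then (1:ℝ) else 0) - if l = j then 1 else 0) ∈ G :=
          ⟨(i, j), ⟨hlt, hne⟩, rfl⟩
        have hflt : f (Real.sign (p0 j / ps j - p0 i / ps i) •
            (fun l => (if l = i then (1:ℝ) else 0) - if l = j then 1 else 0)) < 0 :=
          lt_trans (lt_trans (hfu _ (subset_convexHull ℝ G hmem)) huv) hvneg
        have hgen : (fun l => (if l = i then (1:ℝ) else 0) - if l = j then 1 else 0)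
            = e i - e j := by
          funext l; simp [e, Pi.sub_apply]
        rw [hgen, map_smul, map_sub, smul_eq_mul] at hflt
        rcases hne.lt_or_gt with h | h
        · rw [Real.sign_of_pos (by linarith), one_mul] at hflt
          nlinarith
        · rw [Real.sign_of_neg (by linarith)] at hflt
          nlinarith
      intro i j hne
      rcases lt_trichotomy i j with h | h | h
      · have h2 := aux j i h hne.symm
        nlinarith
      · subst h; exact absurd rfl hne
      · exact aux i j h hne
  · -- easy direction
    rintro ⟨ψ, hψ1, hψ2⟩ v hv hker
    obtain ⟨w, hw, hveq⟩ := hv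
    have hdot0 : ∑ i, ψ i * v i = 0 := hψ1 v hker
    have hdot : ∑ i, ψ i * v i
        = ∑ i, ∑ j ∈ Finset.univ.filter (fun j => j < i),
            (w i j * Real.sign (p0 j / ps j - p0 i / ps i)) * (ψ i - ψ j) := by
      conv_lhs => rw [hveq]
      exact dot_bigsum n ψ _
    have hterm : ∀ i j : Fin n, Real.sign (p0 j / ps j - p0 i / ps i) * (ψ i - ψ j) ≤ 0 := by
      intro i j
      rcases eq_or_ne (p0 i / ps i) (p0 j / ps j) with heq | hne
      · rw [heq, sub_self, Real.sign_zero, zero_mul]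
      · have hp := hψ2 i j hne
        rcases hne.lt_or_gt with h | h
        · rw [Real.sign_of_pos (by linarith), one_mul]; nlinarith
        · rw [Real.sign_of_neg (by linarith)]; nlinarith
    have htermlt : ∀ i j : Fin n, p0 i / ps i ≠ p0 j / ps j →
        Real.sign (p0 j / ps j - p0 i / ps i) * (ψ i - ψ j) < 0 := by
      intro i j hne
      have hp := hψ2 i j hne
      rcases hne.lt_or_gt with h | h
      · rw [Real.sign_of_pos (by linarith), one_mul]; nlinarith
      · rw [Real.sign_of_neg (by linarith)]; nlinarith
    have hnonpos : ∀ i ∈ Finset.univ, (∑ j ∈ Finset.univ.filter (fun j => j < i),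
        (w i j * Real.sign (p0 j / ps j - p0 i / ps i)) * (ψ i - ψ j)) ≤ 0 := by
      intro i _
      refine Finset.sum_nonpos fun j _ => ?_
      rw [mul_assoc]
      have h1 := hw i j
      have h2 := hterm i j
      nlinarith
    have hsum0 : ∑ i, ∑ j ∈ Finset.univ.filter (fun j => j < i),
        (w i j * Real.sign (p0 j / ps j - p0 i / ps i)) * (ψ i - ψ j) = 0 := by
      rw [← hdot]; exact hdot0
    have houter := (Finset.sum_eq_zero_iff_of_nonpos hnonpos).mp hsum0
    have hall : ∀ i : Fin n, ∀ j ∈ Finset.univ.filter (fun j => j < i),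
        (w i j * Real.sign (p0 j / ps j - p0 i / ps i)) * (ψ i - ψ j) = 0 := by
      intro i j hj
      have hinner := houter i (Finset.mem_univ i)
      have hnp : ∀ j ∈ Finset.univ.filter (fun j => j < i),
          (w i j * Real.sign (p0 j / ps j - p0 i / ps i)) * (ψ i - ψ j) ≤ 0 := by
        intro j _
        rw [mul_assoc]
        have h1 := hw i j
        have h2 := hterm i j
        nlinarith
      exact (Finset.sum_eq_zero_iff_of_nonpos hnp).mp hinner j hj
    rw [hveq]
    refine Finset.sum_eq_zero fun i _ => Finset.sum_eq_zero fun j hj => ?_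
    rcases eq_or_ne (p0 i / ps i) (p0 j / ps j) with heq | hne
    · rw [heq, sub_self, Real.sign_zero, mul_zero, zero_smul]
    · have hwz : w i j = 0 := by
        have h0 := hall i j hj
        rw [mul_assoc] at h0
        rcases mul_eq_zero.mp h0 with h | h
        · exact h
        · exact absurd h (ne_of_lt (htermlt i j hne))
      rw [hwz, zero_mul, zero_smul]
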